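/- arXiv:0907.0032 — 7 statements merged into one kernel-verified Lean document; each statement's English description precedes it below -/
import Mathlib

section
/- Let m ≥ 1 and n ≥ 1 be integers with m ≤ 2n, and let α ≥ 1 be an integer with n − α − m + 1 ≥ 0. Then f_{2n+1}(n+α, n−α−m+1) = (n+α)/(2n−m+1). -/
/-- Auxiliary backward-induction for the truncated Chow–Robbins value.
The first argument is the remaining number of tosses `N - (h + t)`. -/
def crAux : ℕ → ℕ → ℕ → ℕ → ℚ
  | 0, N, h, _t => max (1/2) ((h : ℚ) / (N : ℚ))
  | k+1, N, h, t =>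
      max ((crAux k N (h+1) t + crAux k N h (t+1)) / 2) ((h : ℚ) / ((h : ℚ) + (t : ℚ)))

/-- `cr N h t` is the truncated Chow–Robbins value `f_N(h,t)`:
the optimal expected reward of the coin-tossing game truncated at `N` tosses,
starting with `h` heads and `t` tails. -/
def cr (N h t : ℕ) : ℚ := crAux (N - (h + t)) N h t

lemma crAux_stop : ∀ (k N h t : ℕ), h + t + k = N → t + k + 1 ≤ h →
    crAux k N h t = (h : ℚ) / ((h : ℚ) + (t : ℚ)) := by
  intro k
  induction k with
  | zero =>
    intro N h t hN hle
    have hN' : ((N : ℚ)) = (h : ℚ) + (t : ℚ) := by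
      have : h + t = N := by omega
      push_cast [← this]; ring
    have hpos : (0 : ℚ) < (h : ℚ) + (t : ℚ) := by
      have : 1 ≤ h := by omega
      have : (1 : ℚ) ≤ (h : ℚ) := by exact_mod_cast this
      positivity
    have hhalf : (1/2 : ℚ) ≤ (h : ℚ) / ((h : ℚ) + (t : ℚ)) := by
      rw [div_le_div_iff₀ (by norm_num) hpos]
      have : t + 1 ≤ h := by omega
      have : (t : ℚ) + 1 ≤ (h : ℚ) := by exact_mod_cast this
      linarith
    simp only [crAux, hN']
    exact max_eq_right hhalf
  | succ k ih =>
    intro N h t hN hle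
    have h1 : crAux k N (h+1) t = ((h : ℚ)+1) / ((h : ℚ) + 1 + (t : ℚ)) := by
      have := ih N (h+1) t (by omega) (by omega)
      rw [this]; push_cast; ring_nf
    have h2 : crAux k N h (t+1) = (h : ℚ) / ((h : ℚ) + ((t : ℚ) + 1)) := by
      have := ih N h (t+1) (by omega) (by omega)
      rw [this]; push_cast; ring_nf
    have hpos : (0 : ℚ) < (h : ℚ) + (t : ℚ) := by
      have : 1 ≤ h := by omega
      have : (1 : ℚ) ≤ (h : ℚ) := by exact_mod_cast this
      positivity
    have hpos1 : (0 : ℚ) < (h : ℚ) + (t : ℚ) + 1 := by linarith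
    have hth : (t : ℚ) ≤ (h : ℚ) := by
      have : t ≤ h := by omega
      exact_mod_cast this
    show max ((crAux k N (h+1) t + crAux k N h (t+1)) / 2)
        ((h : ℚ) / ((h : ℚ) + (t : ℚ))) = _
    rw [h1, h2]
    apply max_eq_right
    have e1 : (h : ℚ) + 1 + (t : ℚ) = (h : ℚ) + (t : ℚ) + 1 := by ring
    have e2 : (h : ℚ) + ((t : ℚ) + 1) = (h : ℚ) + (t : ℚ) + 1 := by ring
    rw [e1, e2, ← add_div, div_div, div_le_div_iff₀ (by linarith) hpos]
    nlinarith

theorem cr_diag_pos_alpha (m n : ℕ) (α : ℤ) (hm : 1 ≤ m) (hn : 1 ≤ n)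
    (hm2 : m ≤ 2 * n) (hα : 1 ≤ α) (h t : ℕ)
    (hh : (h : ℤ) = (n : ℤ) + α) (ht : (t : ℤ) = (n : ℤ) - α - (m : ℤ) + 1) :
    cr (2 * n + 1) h t = ((n : ℚ) + (α : ℚ)) / (2 * (n : ℚ) - (m : ℚ) + 1) := by
  have hht : h + t + m = 2 * n + 1 := by omega
  have hle : t + m + 1 ≤ h := by omega
  have hk : 2 * n + 1 - (h + t) = m := by omega
  rw [cr, hk, crAux_stop m (2*n+1) h t hht hle]
  have hnum : ((h : ℚ)) = (n : ℚ) + (α : ℚ) := by exact_mod_cast hh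
  have hden : ((h : ℚ)) + (t : ℚ) = 2 * (n : ℚ) - (m : ℚ) + 1 := by
    have : (h : ℤ) + (t : ℤ) = 2 * (n : ℤ) - (m : ℤ) + 1 := by omega
    exact_mod_cast this
  rw [hden, hnum]
end

section
/- For every integer n ≥ 1, f_{2n+1}(n, n) = (4n+3)/(8n+4). (This is the case m = 1, α = 0 of the closed form for values just below the top diagonal.) -/
theorem cr_m1_a0 (n : ℕ) (hn : 1 ≤ n) :
    cr (2 * n + 1) n n = (4 * (n : ℚ) + 3) / (8 * (n : ℚ) + 4) := by
  have h1 : 2 * n + 1 - (n + n) = 1 := by omega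
  rw [cr, h1]
  have hn' : (1 : ℚ) ≤ (n : ℚ) := by exact_mod_cast hn
  have hpos : (0 : ℚ) < 2 * (n : ℚ) + 1 := by linarith
  simp only [crAux]
  push_cast
  rw [max_eq_right (by rw [div_le_div_iff₀ (by norm_num) hpos]; linarith :
      (1:ℚ)/2 ≤ ((n:ℚ)+1) / (2*(n:ℚ)+1)),
    max_eq_left (by rw [div_le_div_iff₀ hpos (by norm_num)]; linarith :
      (n:ℚ) / (2*(n:ℚ)+1) ≤ 1/2)]
  have hE : (((n:ℚ)+1)/(2*(n:ℚ)+1) + 1/2)/2 = (4*(n:ℚ)+3)/(8*(n:ℚ)+4) := by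
    field_simp; ring
  rw [hE, max_eq_left]
  rw [div_le_div_iff₀ (by linarith) (by linarith)]
  nlinarith
end

section
/- For every integer n ≥ 3, f_{2n+1}(n−1, n) = (8n+5)/(16n+8). (This is the case m = 2, α = −1 of the closed form for values two steps below the top diagonal.) -/
theorem cr_m2_am1 (n : ℕ) (hn : 3 ≤ n) :
    cr (2 * n + 1) (n - 1) n = (8 * (n : ℚ) + 5) / (16 * (n : ℚ) + 8) := by
  obtain ⟨k, rfl⟩ : ∃ k, n = k + 3 := ⟨n - 3, by omega⟩
  have h1 : 2 * (k + 3) + 1 - ((k + 3 - 1) + (k + 3)) = 2 := by omega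
  have h2 : k + 3 - 1 = k + 2 := by omega
  rw [cr, h1, h2]
  simp only [crAux]
  push_cast
  set K : ℚ := (k : ℚ) with hKdef
  have hK0 : (0:ℚ) ≤ K := by positivity
  have hN : (0:ℚ) < 2 * (K + 3) + 1 := by linarith
  have hA : (1/2 : ℚ) ⊔ (K + 2 + 1 + 1) / (2 * (K + 3) + 1)
      = (K + 2 + 1 + 1) / (2 * (K + 3) + 1) :=
    max_eq_right ((le_div_iff₀ hN).2 (by linarith))
  have hB : (1/2 : ℚ) ⊔ (K + 2 + 1) / (2 * (K + 3) + 1) = 1/2 :=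
    max_eq_left ((div_le_iff₀ hN).2 (by linarith))
  have hC : (1/2 : ℚ) ⊔ (K + 2) / (2 * (K + 3) + 1) = 1/2 :=
    max_eq_left ((div_le_iff₀ hN).2 (by linarith))
  rw [hA, hB, hC]
  have hAge : (1/2 : ℚ) ≤ (K + 2 + 1 + 1) / (2 * (K + 3) + 1) :=
    (le_div_iff₀ hN).2 (by linarith)
  have hD : ((K + 2 + 1 + 1) / (2 * (K + 3) + 1) + 1/2) / 2 ⊔ (K + 2 + 1) / (K + 2 + 1 + (K + 3))
      = ((K + 2 + 1 + 1) / (2 * (K + 3) + 1) + 1/2) / 2 := by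
    have h5 : (K + 2 + 1) / (K + 2 + 1 + (K + 3)) = 1/2 := by
      rw [div_eq_div_iff (by linarith) (by norm_num)]; ring
    rw [h5]
    exact max_eq_left (by linarith)
  have hE : ((1:ℚ)/2 + 1/2) / 2 ⊔ (K + 2) / (K + 2 + (K + 3 + 1)) = 1/2 := by
    have h6 : (0:ℚ) < K + 2 + (K + 3 + 1) := by linarith
    have := (div_le_iff₀ h6).2 (show K + 2 ≤ 1/2 * (K + 2 + (K + 3 + 1)) by linarith)
    rw [show ((1:ℚ)/2 + 1/2) / 2 = 1/2 by norm_num]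
    exact max_eq_left this
  rw [hD, hE]
  have hXY : (((K + 2 + 1 + 1) / (2 * (K + 3) + 1) + 1/2) / 2 + 1/2) / 2
      = (8 * (K + 3) + 5) / (16 * (K + 3) + 8) := by
    rw [div_eq_div_iff (by norm_num) (by linarith)]
    field_simp
    ring
  rw [hXY]
  refine max_eq_left ?_
  rw [div_le_div_iff₀ (by linarith) (by linarith)]
  nlinarith
end

section
/- For every integer n ≥ 3, f_{2n+1}(n, n−1) = (8n² + 9n + 2)/(16n² + 8n). (This is the case m = 2, α = 0 of the closed form for values two steps below the top diagonal.) -/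
theorem cr_m2_a0 (n : ℕ) (hn : 3 ≤ n) :
    cr (2 * n + 1) n (n - 1) =
      (8 * (n : ℚ)^2 + 9 * (n : ℚ) + 2) / (16 * (n : ℚ)^2 + 8 * (n : ℚ)) := by
  obtain ⟨m, rfl⟩ := Nat.exists_eq_add_of_le hn
  have h1 : 3 + m - 1 = 2 + m := by omega
  have h2 : 2 * (3 + m) + 1 - (3 + m + (2 + m)) = 2 := by omega
  rw [cr, h1, h2]
  simp only [crAux]
  push_cast
  set q := (m : ℚ) with hq
  have hq0 : (0:ℚ) ≤ q := by positivity
  have e1 : (1/2 : ℚ) ⊔ (3 + q + 1 + 1) / (2 * (3 + q) + 1)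
      = (3 + q + 1 + 1) / (2 * (3 + q) + 1) := by
    rw [max_eq_right]
    rw [div_le_div_iff₀ (by norm_num) (by positivity)]; nlinarith
  have e2 : (1/2 : ℚ) ⊔ (3 + q + 1) / (2 * (3 + q) + 1)
      = (3 + q + 1) / (2 * (3 + q) + 1) := by
    rw [max_eq_right]
    rw [div_le_div_iff₀ (by norm_num) (by positivity)]; nlinarith
  have e3 : (1/2 : ℚ) ⊔ (3 + q) / (2 * (3 + q) + 1) = (1/2 : ℚ) := by
    rw [max_eq_left]
    rw [div_le_div_iff₀ (by positivity) (by norm_num)]; nlinarith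
  rw [e1, e2, e3]
  have e4 : ((3 + q + 1 + 1) / (2 * (3 + q) + 1) + (3 + q + 1) / (2 * (3 + q) + 1)) / 2
      ⊔ (3 + q + 1) / (3 + q + 1 + (2 + q)) = (3 + q + 1) / (3 + q + 1 + (2 + q)) := by
    rw [max_eq_right]
    rw [← add_div, div_div, div_le_div_iff₀ (by positivity) (by positivity)]
    nlinarith
  have e5 : ((3 + q + 1) / (2 * (3 + q) + 1) + 1 / 2) / 2
      ⊔ (3 + q) / (3 + q + (2 + q + 1))
      = ((3 + q + 1) / (2 * (3 + q) + 1) + 1 / 2) / 2 := by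
    rw [max_eq_left]
    rw [div_add_div _ _ (by positivity : (2 * (3 + q) + 1 : ℚ) ≠ 0) (by norm_num : (2:ℚ) ≠ 0),
      div_div, div_le_div_iff₀ (by positivity) (by positivity)]
    nlinarith
  rw [e4, e5]
  have e6 : ((3 + q + 1) / (3 + q + 1 + (2 + q)) + ((3 + q + 1) / (2 * (3 + q) + 1) + 1 / 2) / 2) / 2
      = (8 * (3 + q) ^ 2 + 9 * (3 + q) + 2) / (16 * (3 + q) ^ 2 + 8 * (3 + q)) := by
    field_simp; ring
  rw [e6, max_eq_left]
  rw [div_le_div_iff₀ (by positivity) (by positivity)]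
  nlinarith [sq_nonneg q]
end

section
/- For every integer n ≥ 102, f_{2n+1}(n−4, n) = (64n + 33)/(128n + 64). (This is the case m = 5, α = −4 of the closed form for values five steps below the top diagonal.) -/
lemma crAux_zero (N h t : ℕ) : crAux 0 N h t = max (1/2) ((h : ℚ) / (N : ℚ)) := rfl

lemma crAux_succ (k N h t : ℕ) : crAux (k+1) N h t =
    max ((crAux k N (h+1) t + crAux k N h (t+1)) / 2) ((h : ℚ) / ((h : ℚ) + (t : ℚ))) := rfl

example (m : ℕ) : m + 3 + 1 = m + 4 := rfl

lemma half (m : ℕ) : ∀ k h t : ℕ, h + t + k = 2*m+9 → h + k ≤ m+4 → crAux k (2*m+9) h t = 1/2 := by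
  intro k
  induction k with
  | zero =>
    intro h t he hle
    rw [crAux_zero, max_eq_left]
    rw [div_le_div_iff₀ (by positivity) (by norm_num)]
    push_cast
    have : (h:ℚ) ≤ m + 4 := by exact_mod_cast hle
    linarith
  | succ k ih =>
    intro h t he hle
    rw [crAux_succ, ih (h+1) t (by omega) (by omega), ih h (t+1) (by omega) (by omega)]
    rw [show ((1:ℚ)/2 + 1/2)/2 = 1/2 by norm_num, max_eq_left]
    have hpos : (0:ℚ) < (h:ℚ) + t := by
      have : 0 < h + t := by omega
      exact_mod_cast this
    rw [div_le_div_iff₀ hpos (by norm_num)]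
    have : (h:ℚ) ≤ t := by exact_mod_cast (show h ≤ t by omega)
    linarith

lemma W0 (m : ℕ) : crAux 0 (2*m+9) (m+5) (m+4) = ((m:ℚ)+5)/(2*m+9) := by
  rw [crAux_zero]
  push_cast
  rw [max_eq_right]
  rw [div_le_div_iff₀ (by norm_num) (by positivity)]
  nlinarith [(show (0:ℚ) ≤ (m:ℚ) from by positivity)]

lemma W1 (m : ℕ) : crAux 1 (2*m+9) (m+4) (m+4) = (4*(m:ℚ)+19)/(8*m+36) := by
  rw [crAux_succ, show m+4+1 = m+5 from rfl, W0 m,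
    half m 0 (m+4) (m+5) (by omega) (by omega)]
  push_cast
  have e : (((m:ℚ)+5)/(2*m+9) + 1/2)/2 = (4*(m:ℚ)+19)/(8*m+36) := by
    have h1 : (2*(m:ℚ)+9) ≠ 0 := by positivity
    field_simp
    ring
  rw [e, max_eq_left]
  rw [div_le_div_iff₀ (by positivity) (by positivity)]
  nlinarith [(show (0:ℚ) ≤ (m:ℚ) from by positivity)]

lemma W2 (m : ℕ) : crAux 2 (2*m+9) (m+3) (m+4) = (8*(m:ℚ)+37)/(16*m+72) := by
  rw [crAux_succ, show m+3+1 = m+4 from rfl, show m+4+1 = m+5 from rfl, W1 m,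
    half m 1 (m+3) (m+5) (by omega) (by omega)]
  push_cast
  have e : ((4*(m:ℚ)+19)/(8*m+36) + 1/2)/2 = (8*(m:ℚ)+37)/(16*m+72) := by
    have h1 : (8*(m:ℚ)+36) ≠ 0 := by positivity
    field_simp
    ring
  rw [e, max_eq_left]
  rw [div_le_div_iff₀ (by positivity) (by positivity)]
  nlinarith [(show (0:ℚ) ≤ (m:ℚ) from by positivity)]

lemma W3 (m : ℕ) : crAux 3 (2*m+9) (m+2) (m+4) = (16*(m:ℚ)+73)/(32*m+144) := by
  rw [crAux_succ, show m+2+1 = m+3 from rfl, show m+4+1 = m+5 from rfl, W2 m,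
    half m 2 (m+2) (m+5) (by omega) (by omega)]
  push_cast
  have e : ((8*(m:ℚ)+37)/(16*m+72) + 1/2)/2 = (16*(m:ℚ)+73)/(32*m+144) := by
    have h1 : (16*(m:ℚ)+72) ≠ 0 := by positivity
    field_simp
    ring
  rw [e, max_eq_left]
  rw [div_le_div_iff₀ (by positivity) (by positivity)]
  nlinarith [(show (0:ℚ) ≤ (m:ℚ) from by positivity)]

lemma W4 (m : ℕ) : crAux 4 (2*m+9) (m+1) (m+4) = (32*(m:ℚ)+145)/(64*m+288) := by
  rw [crAux_succ, show m+1+1 = m+2 from rfl, show m+4+1 = m+5 from rfl, W3 m,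
    half m 3 (m+1) (m+5) (by omega) (by omega)]
  push_cast
  have e : ((16*(m:ℚ)+73)/(32*m+144) + 1/2)/2 = (32*(m:ℚ)+145)/(64*m+288) := by
    have h1 : (32*(m:ℚ)+144) ≠ 0 := by positivity
    field_simp
    ring
  rw [e, max_eq_left]
  rw [div_le_div_iff₀ (by positivity) (by positivity)]
  nlinarith [(show (0:ℚ) ≤ (m:ℚ) from by positivity)]

lemma W5 (m : ℕ) : crAux 5 (2*m+9) m (m+4) = (64*(m:ℚ)+289)/(128*m+576) := by
  rw [crAux_succ, show m+1 = m+1 from rfl, show m+4+1 = m+5 from rfl, W4 m,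
    half m 4 m (m+5) (by omega) (by omega)]
  push_cast
  have e : ((32*(m:ℚ)+145)/(64*m+288) + 1/2)/2 = (64*(m:ℚ)+289)/(128*m+576) := by
    have h1 : (64*(m:ℚ)+288) ≠ 0 := by positivity
    field_simp
    ring
  rw [e, max_eq_left]
  rcases Nat.eq_zero_or_pos m with hm | hm
  · subst hm; norm_num
  · rw [div_le_div_iff₀ (by exact_mod_cast (show (0:ℚ) < (m:ℚ)+((m:ℚ)+4) from by positivity)) (by positivity)]
    nlinarith [(show (0:ℚ) ≤ (m:ℚ) from by positivity)]

theorem cr_m5_am4 (n : ℕ) (hn : 102 ≤ n) :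
    cr (2 * n + 1) (n - 4) n = (64 * (n : ℚ) + 33) / (128 * (n : ℚ) + 64) := by
  obtain ⟨m, rfl⟩ : ∃ m, n = m + 4 := ⟨n - 4, by omega⟩
  rw [show 2*(m+4)+1 = 2*m+9 from by ring, show m+4-4 = m from by omega]
  rw [show cr (2*m+9) m (m+4) = crAux (2*m+9 - (m + (m+4))) (2*m+9) m (m+4) from rfl,
    show 2*m+9 - (m + (m+4)) = 5 from by omega, W5 m]
  push_cast
  rw [div_eq_div_iff (by positivity) (by positivity)]
  ring
end

section
/- For every integer n ≥ 102, f_{2n+1}(n, n−4) = (256n⁵ − 124n⁴ − 340n³ + 91n² + 75n − 6)/(512n⁵ − 1280n⁴ + 640n³ + 320n² − 192n). (This is the case m = 5, α = 0 of the closed form for values five steps below the top diagonal.) -/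
set_option maxHeartbeats 1600000

lemma crAux_side (n : ℕ) (hn : 102 ≤ n) :
    ∀ k a b : ℕ, 1 ≤ a → a + b + k = 5 →
      crAux k (2*n+1) (n+a) ((n-4)+b) = ((n:ℚ)+a)/(2*(n:ℚ)-4+(a+b)) := by
  have hq : (102:ℚ) ≤ (n:ℚ) := by exact_mod_cast hn
  have hn4 : ((n-4:ℕ):ℚ) = (n:ℚ)-4 := by
    have h4 : (4:ℕ) ≤ n := by omega
    push_cast [h4]; ring
  intro k
  induction k with
  | zero =>
      intro a b ha hab
      have hbq : (a:ℚ) + b = 5 := by exact_mod_cast (by omega : a + b = 5)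
      have haq : (1:ℚ) ≤ a := by exact_mod_cast ha
      simp only [crAux]
      rw [max_eq_right, hbq]
      · push_cast; ring_nf
      · push_cast
        rw [div_le_div_iff₀ (by norm_num) (by linarith)]
        linarith
  | succ k ih =>
      intro a b ha hab
      have haq : (1:ℚ) ≤ a := by exact_mod_cast ha
      have hbq : (b:ℚ) ≤ 4 := by exact_mod_cast (by omega : b ≤ 4)
      have hsq : (a:ℚ) + b + k = 4 := by exact_mod_cast (by omega : a + b + k = 4)
      simp only [crAux]
      rw [show n+a+1 = n+(a+1) from rfl, show (n-4)+b+1 = (n-4)+(b+1) from rfl,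
        ih (a+1) b (by omega) (by omega), ih a (b+1) ha (by omega)]
      push_cast [hn4]
      have hD : (0:ℚ) < 2*(n:ℚ)-4+(a+b) := by linarith
      have hD1 : (0:ℚ) < 2*(n:ℚ)-4+(a+1+b) := by linarith
      have hD2 : (0:ℚ) < 2*(n:ℚ)-4+(a+(b+1)) := by linarith
      rw [max_eq_right]
      · rw [show (n:ℚ)+a+((n:ℚ)-4+b) = 2*(n:ℚ)-4+(a+b) from by ring]
      · rw [div_add_div _ _ (ne_of_gt hD1) (ne_of_gt hD2), div_div,
          div_le_div_iff₀ (by positivity) (by linarith)]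
        nlinarith [sq_nonneg ((n:ℚ)+a), hq, haq, hbq]

theorem cr_m5_a0 (n : ℕ) (hn : 102 ≤ n) :
    cr (2 * n + 1) n (n - 4) =
      (256 * (n : ℚ)^5 - 124 * (n : ℚ)^4 - 340 * (n : ℚ)^3 + 91 * (n : ℚ)^2 + 75 * (n : ℚ) - 6) /
        (512 * (n : ℚ)^5 - 1280 * (n : ℚ)^4 + 640 * (n : ℚ)^3 + 320 * (n : ℚ)^2 - 192 * (n : ℚ)) := by
  have hq : (102:ℚ) ≤ (n:ℚ) := by exact_mod_cast hn
  have hn4 : ((n-4:ℕ):ℚ) = (n:ℚ)-4 := by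
    have h4 : (4:ℕ) ≤ n := by omega
    push_cast [h4]; ring
  have hS := crAux_side n hn
  -- positivity facts
  have p1 : (0:ℚ) < 2*(n:ℚ)+1 := by linarith
  have p2 : (0:ℚ) < 2*(n:ℚ) := by linarith
  have p3 : (0:ℚ) < 2*(n:ℚ)-1 := by linarith
  have p4 : (0:ℚ) < 2*(n:ℚ)-2 := by linarith
  have p5 : (0:ℚ) < 2*(n:ℚ)-3 := by linarith
  have p6 : (0:ℚ) < 2*(n:ℚ)-4 := by linarith
  have d1 : (0:ℚ) < 8*(n:ℚ)+4 := by linarith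
  have d2 : (0:ℚ) < 16*(n:ℚ)^2+8*(n:ℚ) := by nlinarith
  have d3 : (0:ℚ) < 64*(n:ℚ)^3-16*(n:ℚ) := by nlinarith
  have d4 : (0:ℚ) < 256*(n:ℚ)^4-256*(n:ℚ)^3-64*(n:ℚ)^2+64*(n:ℚ) := by nlinarith
  have d5 : (0:ℚ) < 512*(n:ℚ)^5-1280*(n:ℚ)^4+640*(n:ℚ)^3+320*(n:ℚ)^2-192*(n:ℚ) := by nlinarith
  have two : (0:ℚ) < 2 := by norm_num
  have c1 : (0:ℚ) < (2*(n:ℚ)+1)*2*2 := by positivity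
  have c2 : (0:ℚ) < 2*(n:ℚ)*(8*(n:ℚ)+4)*2 := mul_pos (mul_pos p2 d1) two
  have c3 : (0:ℚ) < (2*(n:ℚ)-1)*(16*(n:ℚ)^2+8*(n:ℚ))*2 := mul_pos (mul_pos p3 d2) two
  have c4 : (0:ℚ) < (2*(n:ℚ)-2)*(64*(n:ℚ)^3-16*(n:ℚ))*2 := mul_pos (mul_pos p4 d3) two
  have c5 : (0:ℚ) < (2*(n:ℚ)-3)*(256*(n:ℚ)^4-256*(n:ℚ)^3-64*(n:ℚ)^2+64*(n:ℚ))*2 := mul_pos (mul_pos p5 d4) two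
  -- side instances
  have S0 : crAux 0 (2*n+1) (n+1) ((n-4)+4) = ((n:ℚ)+1)/(2*(n:ℚ)+1) := by
    rw [hS 0 1 4 (by norm_num) rfl]; push_cast; ring
  have S1 : crAux 1 (2*n+1) (n+1) ((n-4)+3) = ((n:ℚ)+1)/(2*(n:ℚ)) := by
    rw [hS 1 1 3 (by norm_num) rfl]; push_cast; ring
  have S2 : crAux 2 (2*n+1) (n+1) ((n-4)+2) = ((n:ℚ)+1)/(2*(n:ℚ)-1) := by
    rw [hS 2 1 2 (by norm_num) rfl]; push_cast; ring
  have S3 : crAux 3 (2*n+1) (n+1) ((n-4)+1) = ((n:ℚ)+1)/(2*(n:ℚ)-2) := by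
    rw [hS 3 1 1 (by norm_num) rfl]; push_cast; ring
  have S4 : crAux 4 (2*n+1) (n+1) ((n-4)+0) = ((n:ℚ)+1)/(2*(n:ℚ)-3) := by
    rw [hS 4 1 0 (by norm_num) rfl]; push_cast; ring
  -- stop-value simplifications
  have T4 : (n:ℚ)+(((n-4)+4 : ℕ):ℚ) = 2*(n:ℚ) := by push_cast [hn4]; ring
  have T3 : (n:ℚ)+(((n-4)+3 : ℕ):ℚ) = 2*(n:ℚ)-1 := by push_cast [hn4]; ring
  have T2 : (n:ℚ)+(((n-4)+2 : ℕ):ℚ) = 2*(n:ℚ)-2 := by push_cast [hn4]; ring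
  have T1 : (n:ℚ)+(((n-4)+1 : ℕ):ℚ) = 2*(n:ℚ)-3 := by push_cast [hn4]; ring
  have T0 : (n:ℚ)+(((n-4) : ℕ):ℚ) = 2*(n:ℚ)-4 := by push_cast [hn4]; ring
  -- W0
  have W0 : crAux 0 (2*n+1) n ((n-4)+5) = 1/2 := by
    simp only [crAux]
    rw [max_eq_left]
    push_cast
    rw [div_le_div_iff₀ (by linarith) (by norm_num)]
    linarith
  -- W1
  have W1 : crAux 1 (2*n+1) n ((n-4)+4) = (4*(n:ℚ)+3)/(8*(n:ℚ)+4) := by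
    have e : crAux 1 (2*n+1) n ((n-4)+4)
        = max ((crAux 0 (2*n+1) (n+1) ((n-4)+4) + crAux 0 (2*n+1) n ((n-4)+5))/2)
            ((n:ℚ)/((n:ℚ)+(((n-4)+4 : ℕ) : ℚ))) := rfl
    rw [e, S0, W0, T4, max_eq_left]
    · field_simp
      ring
    · rw [div_add_div _ _ p1.ne' (by norm_num : (2:ℚ) ≠ 0), div_div,
        div_le_div_iff₀ p2 c1]
      nlinarith
  -- W2
  have W2 : crAux 2 (2*n+1) n ((n-4)+3)
      = (8*(n:ℚ)^2+9*(n:ℚ)+2)/(16*(n:ℚ)^2+8*(n:ℚ)) := by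
    have e : crAux 2 (2*n+1) n ((n-4)+3)
        = max ((crAux 1 (2*n+1) (n+1) ((n-4)+3) + crAux 1 (2*n+1) n ((n-4)+4))/2)
            ((n:ℚ)/((n:ℚ)+(((n-4)+3 : ℕ) : ℚ))) := rfl
    rw [e, S1, W1, T3, max_eq_left]
    · field_simp
      ring
    · rw [div_add_div _ _ p2.ne' d1.ne', div_div,
        div_le_div_iff₀ p3 c2]
      nlinarith
  -- W3
  have W3 : crAux 3 (2*n+1) n ((n-4)+2)
      = (32*(n:ℚ)^3+34*(n:ℚ)^2+3*(n:ℚ)-2)/(64*(n:ℚ)^3-16*(n:ℚ)) := by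
    have e : crAux 3 (2*n+1) n ((n-4)+2)
        = max ((crAux 2 (2*n+1) (n+1) ((n-4)+2) + crAux 2 (2*n+1) n ((n-4)+3))/2)
            ((n:ℚ)/((n:ℚ)+(((n-4)+2 : ℕ) : ℚ))) := rfl
    rw [e, S2, W2, T2, max_eq_left]
    · rw [div_add_div _ _ p3.ne' d2.ne', div_div, div_eq_div_iff c3.ne' d3.ne']
      ring
    · rw [div_add_div _ _ p3.ne' d2.ne', div_div,
        div_le_div_iff₀ p4 c3]
      nlinarith
  -- W4
  have W4 : crAux 4 (2*n+1) n ((n-4)+1)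
      = (128*(n:ℚ)^4+68*(n:ℚ)^3-78*(n:ℚ)^2-26*(n:ℚ)+4)/(256*(n:ℚ)^4-256*(n:ℚ)^3-64*(n:ℚ)^2+64*(n:ℚ)) := by
    have e : crAux 4 (2*n+1) n ((n-4)+1)
        = max ((crAux 3 (2*n+1) (n+1) ((n-4)+1) + crAux 3 (2*n+1) n ((n-4)+2))/2)
            ((n:ℚ)/((n:ℚ)+(((n-4)+1 : ℕ) : ℚ))) := rfl
    rw [e, S3, W3, T1, max_eq_left]
    · rw [div_add_div _ _ p4.ne' d3.ne', div_div, div_eq_div_iff c4.ne' d4.ne']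
      ring
    · rw [div_add_div _ _ p4.ne' d3.ne', div_div,
        div_le_div_iff₀ p5 c4]
      nlinarith
  -- W5 / final
  have e : cr (2*n+1) n (n-4) = crAux 5 (2*n+1) n (n-4) := by
    rw [cr, show 2*n+1 - (n+(n-4)) = 5 from by omega]
  rw [e]
  have e5 : crAux 5 (2*n+1) n (n-4)
      = max ((crAux 4 (2*n+1) (n+1) ((n-4)+0) + crAux 4 (2*n+1) n ((n-4)+1))/2)
          ((n:ℚ)/((n:ℚ)+(((n-4) : ℕ) : ℚ))) := rfl
  rw [e5, S4, W4, T0, max_eq_left]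
  · rw [div_add_div _ _ p5.ne' d4.ne', div_div, div_eq_div_iff c5.ne' d5.ne']
    ring
  · rw [div_add_div _ _ p5.ne' d4.ne', div_div,
      div_le_div_iff₀ p6 c5]
    nlinarith
end

section
/- The cutoff for the position with 2 heads and 1 tail is 51: for every integer N with 3 ≤ N ≤ 50 one has f_N(2,1) = 2/3 (so in the game truncated at N ≤ 50 tosses it is optimal to stop at (2,1)), whereas f_{51}(2,1) > 2/3 (so for horizon N ≥ 51 it is optimal to continue). -/
def nmax (a b : ℕ) : ℕ := if a ≤ b then b else a

lemma nmax_eq (a b : ℕ) : nmax a b = max a b := (max_def a b).symm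

/-- Scaled integer table: entry `h` of `rowsN N L k` equals `2^k * L * crAux k N h (N-k-h)`. -/
def rowsN (N L : ℕ) : ℕ → List ℕ
  | 0 => (List.range (N+1)).map (fun h => nmax (L/2) (h*(L/N)))
  | k+1 =>
      let p := rowsN N L k
      (List.range (N-k)).map (fun h =>
        nmax (p.getD (h+1) 0 + p.getD h 0) (2^(k+1) * (L/(N-(k+1))) * h))

lemma getD_range_map {α : Type*} (f : ℕ → α) (d : α) (n i : ℕ) (hi : i < n) :
    ((List.range n).map f).getD i d = f i := by
  rw [List.getD_eq_getElem _ _ (by simpa using hi)]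
  simp

lemma crAux_nonneg : ∀ k N h t, 0 ≤ crAux k N h t
  | 0, N, h, t => le_max_of_le_left (by norm_num)
  | k+1, N, h, t => le_max_of_le_right (by positivity)

lemma rowsN_eq (N L : ℕ) (hL : ∀ m, 1 ≤ m → m ≤ N → m ∣ L) (h2 : 2 ∣ L) :
    ∀ k, k ≤ N → ∀ h t, h + t = N - k →
    ((rowsN N L k).getD h 0 : ℚ) = 2^k * L * crAux k N h t := by
  intro k
  induction k with
  | zero =>
    intro _ h t hht
    have hh : h < N + 1 := by omega
    simp only [rowsN, crAux]
    rw [getD_range_map _ _ _ _ hh, nmax_eq]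
    rcases Nat.eq_zero_or_pos N with hN | hN
    · have hh0 : h = 0 := by omega
      subst hN hh0
      rw [Nat.cast_max, Nat.cast_div h2 (by norm_num)]
      norm_num
      rw [max_eq_left (by positivity)]
      ring
    · have hNd : N ∣ L := hL N hN le_rfl
      have hNne : ((N:ℚ)) ≠ 0 := by positivity
      rw [Nat.cast_max, Nat.cast_mul, Nat.cast_div h2 (by norm_num),
        Nat.cast_div hNd hNne, pow_zero, one_mul,
        mul_max_of_nonneg _ _ (by positivity : (0:ℚ) ≤ (L:ℚ))]
      congr 1 <;> ring
  | succ k ih =>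
    intro hk h t hht
    have hh : h < N - k := by omega
    simp only [rowsN, crAux]
    rw [getD_range_map _ _ _ _ hh, nmax_eq, Nat.cast_max, Nat.cast_add,
      ih (by omega) (h+1) t (by omega), ih (by omega) h (t+1) (by omega)]
    rcases Nat.eq_zero_or_pos (h + t) with hm | hm
    · have h0 : h = 0 := by omega
      have t0 : t = 0 := by omega
      subst h0 t0
      have fa := crAux_nonneg k N (0+1) 0
      have fb := crAux_nonneg k N 0 (0+1)
      have e1 : ((0:ℕ):ℚ) / (((0:ℕ):ℚ) + ((0:ℕ):ℚ)) = 0 := by norm_num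
      have e2 : (2^(k+1) * (L / (N - (k+1))) * 0 : ℕ) = 0 := by ring
      rw [e1, e2, Nat.cast_zero]
      rw [max_eq_left (add_nonneg (mul_nonneg (by positivity) fa) (mul_nonneg (by positivity) fb)),
        max_eq_left (div_nonneg (add_nonneg fa fb) (by norm_num))]
      ring
    · have hmN : h + t ≤ N := by omega
      have hmd : (h + t) ∣ L := hL _ hm hmN
      have hmne : (((h+t:ℕ)):ℚ) ≠ 0 := by positivity
      have hNK : N - (k+1) = h + t := by omega
      rw [hNK, Nat.cast_mul, Nat.cast_mul, Nat.cast_div hmd hmne,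
        mul_max_of_nonneg _ _ (by positivity : (0:ℚ) ≤ 2^(k+1) * (L:ℚ))]
      congr 1
      · ring
      · have : ((h:ℚ) + (t:ℚ)) = ((h+t : ℕ) : ℚ) := by push_cast; ring
        rw [this]
        field_simp
        push_cast; ring

lemma key (N : ℕ) (hN : 3 ≤ N) :
    ((rowsN N N.factorial (N-3)).getD 2 0 : ℚ) = 2^(N-3) * N.factorial * cr N 2 1 := by
  have h := rowsN_eq N N.factorial (fun m h1 hm => Nat.dvd_factorial h1 hm)
    (Nat.dvd_factorial (by norm_num) (by omega)) (N-3) (by omega) 2 1 (by omega)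
  rw [cr]
  exact h

set_option maxRecDepth 1000000 in
set_option maxHeartbeats 20000000 in
lemma comp1 : ∀ N, 3 ≤ N → N ≤ 50 →
    3 * (rowsN N N.factorial (N-3)).getD 2 0 = 2^(N-3) * N.factorial * 2 := by decide

set_option maxRecDepth 1000000 in
set_option maxHeartbeats 20000000 in
lemma comp2 : 2 * (2^(51-3) * Nat.factorial 51)
    < 3 * (rowsN 51 (Nat.factorial 51) (51-3)).getD 2 0 := by decide

theorem cutoff_2_1 :
    (∀ N : ℕ, 3 ≤ N → N ≤ 50 → cr N 2 1 = 2 / 3) ∧ 2 / 3 < cr 51 2 1 := by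
  constructor
  · intro N h3 h50
    have hk := key N h3
    have hnat := comp1 N h3 h50
    have hq : (3:ℚ) * ((rowsN N N.factorial (N-3)).getD 2 0 : ℚ)
        = 2^(N-3) * (N.factorial:ℚ) * 2 := by exact_mod_cast congrArg (fun n : ℕ => (n:ℚ)) hnat
    have hC : ((2:ℚ)^(N-3) * (N.factorial:ℚ)) ≠ 0 := by positivity
    have hmain : (2^(N-3) * (N.factorial:ℚ)) * (3 * cr N 2 1)
        = (2^(N-3) * (N.factorial:ℚ)) * 2 := by
      rw [hk] at hq
      linarith [hq]
    have h2 := mul_left_cancel₀ hC hmain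
    linarith
  · have hk := key 51 (by norm_num)
    have hq : (2:ℚ) * (2^(51-3) * (Nat.factorial 51 : ℚ))
        < 3 * ((rowsN 51 (Nat.factorial 51) (51-3)).getD 2 0 : ℚ) := by exact_mod_cast comp2
    rw [hk] at hq
    have hC : (0:ℚ) < 2^(51-3) * (Nat.factorial 51:ℚ) := by positivity
    nlinarith [hq, hC]
end
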